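/- Let 𝒪 = {(x,v,a) ∈ ℝ³ : v ≠ 0} and define on 𝒪 the vector fields X₁(x,v,a) = (0,0,2v), X₂(x,v,a) = (0,v,2a), X₃(x,v,a) = (v,a,3a²/(2v)), and Y₁(x,v,a) = (1,0,0), Y₂(x,v,a) = (x,v,a), Y₃(x,v,a) = (x², 2vx, 2(ax+v²)). Then at every point of 𝒪: [Xα,Yβ] = 0 for all α,β ∈ {1,2,3}, and moreover [Y₁,Y₂] = Y₁, [Y₁,Y₃] = 2Y₂, [Y₂,Y₃] = Y₃; hence Y₁,Y₂,Y₃ span a Lie algebra of Lie symmetries of the Schwarz system isomorphic to 𝔰𝔩₂, and ⟨X₁,X₂,X₃,Y₁,Y₂,Y₃⟩ is a Lie algebra isomorphic to 𝔰𝔩₂ ⊕ 𝔰𝔩₂. -/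

import Mathlib

/-- The pointwise Lie bracket of two vector fields on (an open subset of) ℝⁿ,
    `[V,W](p) = (DW)(p)(V(p)) − (DV)(p)(W(p))`. -/
noncomputable def vbracket {n : ℕ} (V W : (Fin n → ℝ) → (Fin n → ℝ)) :
    (Fin n → ℝ) → (Fin n → ℝ) :=
  fun p => fderiv ℝ W p (V p) - fderiv ℝ V p (W p)

/-- Coordinates on 𝒪 ⊂ ℝ³ are (x,v,a) = (p 0, p 1, p 2). The Vessiot–Guldberg
vector fields X₁, X₂, X₃ of the Schwarz system, indexed by `Fin 3`. -/
noncomputable def schX : Fin 3 → (Fin 3 → ℝ) → (Fin 3 → ℝ) :=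
  ![fun p => ![0, 0, 2 * p 1],
    fun p => ![0, p 1, 2 * p 2],
    fun p => ![p 1, p 2, 3 * (p 2) ^ 2 / (2 * p 1)]]

/-- The Lie symmetries Y₁, Y₂, Y₃ of the Schwarz system, indexed by `Fin 3`. -/
def schY : Fin 3 → (Fin 3 → ℝ) → (Fin 3 → ℝ) :=
  ![fun _ => ![1, 0, 0],
    fun p => ![p 0, p 1, p 2],
    fun p => ![(p 0) ^ 2, 2 * p 1 * p 0, 2 * (p 2 * p 0 + (p 1) ^ 2)]]

section helpers

open ContinuousLinearMap

abbrev π3 (i : Fin 3) : (Fin 3 → ℝ) →L[ℝ] ℝ := ContinuousLinearMap.proj i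

lemma hproj (p : Fin 3 → ℝ) (i : Fin 3) :
    HasFDerivAt (fun q : Fin 3 → ℝ => q i) (π3 i) p := by
  exact (ContinuousLinearMap.proj (R := ℝ) (φ := fun _ : Fin 3 => ℝ) i).hasFDerivAt

lemma hsq (p : Fin 3 → ℝ) (i : Fin 3) :
    HasFDerivAt (fun q : Fin 3 → ℝ => (q i) ^ 2) ((2 * p i) • π3 i) p := by
  have h := (hproj p i).mul (hproj p i)
  have e : ((fun q : Fin 3 → ℝ => q i) * fun q => q i) = fun q => (q i) ^ 2 := by
    funext q; rw [Pi.mul_apply]; ring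
  rw [e] at h
  exact h.congr_fderiv (by module)

lemma hmat {f g h : (Fin 3 → ℝ) → ℝ} {Lf Lg Lh : (Fin 3 → ℝ) →L[ℝ] ℝ} {p}
    (hf : HasFDerivAt f Lf p) (hg : HasFDerivAt g Lg p) (hh : HasFDerivAt h Lh p) :
    HasFDerivAt (fun q => ![f q, g q, h q]) (ContinuousLinearMap.pi ![Lf, Lg, Lh]) p := by
  have : HasFDerivAt (fun q (i : Fin 3) => ![f, g, h] i q)
      (ContinuousLinearMap.pi ![Lf, Lg, Lh]) p := by
    refine hasFDerivAt_pi.mpr ?_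
    intro i
    fin_cases i <;> simpa
  convert this using 2 with q
  funext i; fin_cases i <;> simp

lemma vbracket_eq {V W : (Fin 3 → ℝ) → (Fin 3 → ℝ)} {LV LW : (Fin 3 → ℝ) →L[ℝ] (Fin 3 → ℝ)}
    {p} (hV : HasFDerivAt V LV p) (hW : HasFDerivAt W LW p) :
    vbracket V W p = LW (V p) - LV (W p) := by
  rw [vbracket, hV.fderiv, hW.fderiv]

end helpers

set_option maxHeartbeats 1600000 in
/-- At every point of 𝒪 = {v ≠ 0}: [Xα,Yβ] = 0 for all α,β, and
[Y₁,Y₂] = Y₁, [Y₁,Y₃] = 2Y₂, [Y₂,Y₃] = Y₃; hence Y₁,Y₂,Y₃ span a Lie algebra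
of Lie symmetries isomorphic to 𝔰𝔩₂ and ⟨X₁,X₂,X₃,Y₁,Y₂,Y₃⟩ ≅ 𝔰𝔩₂ ⊕ 𝔰𝔩₂. -/
theorem schwarz_symmetries_sl2_sl2 :
    ∀ p : Fin 3 → ℝ, p 1 ≠ 0 →
      (∀ α β : Fin 3, vbracket (schX α) (schY β) p = 0) ∧
      vbracket (schY 0) (schY 1) p = schY 0 p ∧
      vbracket (schY 0) (schY 2) p = (2 : ℝ) • schY 1 p ∧
      vbracket (schY 1) (schY 2) p = schY 2 p := by
  intro p hp
  -- derivatives of all six fields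
  have h0 : HasFDerivAt (fun _ : Fin 3 → ℝ => (0:ℝ)) (0 : (Fin 3 → ℝ) →L[ℝ] ℝ) p :=
    hasFDerivAt_const 0 p
  have hX1 : HasFDerivAt (schX 0) (ContinuousLinearMap.pi ![0, 0, (2:ℝ) • π3 1]) p := by
    show HasFDerivAt (fun q => ![(0:ℝ), 0, 2 * q 1]) _ p
    exact hmat h0 h0 ((hproj p 1).const_mul 2)
  have hX2 : HasFDerivAt (schX 1) (ContinuousLinearMap.pi ![0, π3 1, (2:ℝ) • π3 2]) p := by
    show HasFDerivAt (fun q => ![(0:ℝ), q 1, 2 * q 2]) _ p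
    exact hmat h0 (hproj p 1) ((hproj p 2).const_mul 2)
  have hinv : HasFDerivAt (fun q : Fin 3 → ℝ => (q 1)⁻¹)
      ((-((p 1) ^ 2)⁻¹) • π3 1) p := by
    have := (hasFDerivAt_inv hp).comp p (hproj p 1)
    refine this.congr_fderiv ?_
    ext v
    simp only [ContinuousLinearMap.comp_apply, ContinuousLinearMap.toSpanSingleton_apply,
      ContinuousLinearMap.smul_apply, smul_eq_mul]
    ring
  have hX3 : HasFDerivAt (schX 2) (ContinuousLinearMap.pi
      ![π3 1, π3 2,
        ((3 * p 2) / (p 1)) • π3 2 + (-(3 * (p 2)^2 / (2 * (p 1)^2))) • π3 1]) p := by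
    show HasFDerivAt (fun q => ![q 1, q 2, 3 * (q 2) ^ 2 / (2 * q 1)]) _ p
    refine hmat (hproj p 1) (hproj p 2) ?_
    have key : HasFDerivAt (fun q : Fin 3 → ℝ => (3 / 2 * (q 2) ^ 2) * (q 1)⁻¹)
        (_) p := ((hsq p 2).const_mul (3 / 2)).mul hinv
    have : (fun q : Fin 3 → ℝ => 3 * (q 2) ^ 2 / (2 * q 1)) =
        fun q => (3 / 2 * (q 2) ^ 2) * (q 1)⁻¹ := by
      funext q; rw [div_mul_eq_div_div]; ring
    rw [this]
    exact key.congr_fderiv (by module)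
  have hY1 : HasFDerivAt (schY 0) (0 : (Fin 3 → ℝ) →L[ℝ] (Fin 3 → ℝ)) p := by
    show HasFDerivAt (fun _ : Fin 3 → ℝ => ![(1:ℝ),0,0]) _ p
    exact hasFDerivAt_const _ p
  have hY2 : HasFDerivAt (schY 1) (ContinuousLinearMap.pi ![π3 0, π3 1, π3 2]) p := by
    show HasFDerivAt (fun q => ![q 0, q 1, q 2]) _ p
    exact hmat (hproj p 0) (hproj p 1) (hproj p 2)
  have hY3 : HasFDerivAt (schY 2) (ContinuousLinearMap.pi
      ![(2 * p 0) • π3 0,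
        (2 * p 1) • π3 0 + (2 * p 0) • π3 1,
        (2 * p 0) • π3 2 + (2 * p 2) • π3 0 + (4 * p 1) • π3 1]) p := by
    show HasFDerivAt (fun q => ![(q 0)^2, 2 * q 1 * q 0, 2 * (q 2 * q 0 + (q 1)^2)]) _ p
    refine hmat ?_ ?_ ?_
    · exact hsq p 0
    · have := (((hproj p 1).const_mul 2).mul (hproj p 0))
      exact this.congr_fderiv (by module)
    · have := (((hproj p 2).mul (hproj p 0)).add (hsq p 1)).const_mul 2
      exact this.congr_fderiv (by module)
  refine ⟨?_, ?_, ?_, ?_⟩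
  · intro α β
    fin_cases α <;> fin_cases β
    · show vbracket (schX 0) (schY 0) p = 0
      rw [vbracket_eq hX1 hY1]; funext i; fin_cases i <;>
        (simp [schX, schY]; try field_simp) <;> try ring
    · show vbracket (schX 0) (schY 1) p = 0
      rw [vbracket_eq hX1 hY2]; funext i; fin_cases i <;>
        (simp [schX, schY]; try field_simp) <;> try ring
    · show vbracket (schX 0) (schY 2) p = 0
      rw [vbracket_eq hX1 hY3]; funext i; fin_cases i <;>
        (simp [schX, schY]; try field_simp) <;> try ring
    · show vbracket (schX 1) (schY 0) p = 0
      rw [vbracket_eq hX2 hY1]; funext i; fin_cases i <;>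
        (simp [schX, schY]; try field_simp) <;> try ring
    · show vbracket (schX 1) (schY 1) p = 0
      rw [vbracket_eq hX2 hY2]; funext i; fin_cases i <;>
        (simp [schX, schY]; try field_simp) <;> try ring
    · show vbracket (schX 1) (schY 2) p = 0
      rw [vbracket_eq hX2 hY3]; funext i; fin_cases i <;>
        (simp [schX, schY]; try field_simp) <;> try ring
    · show vbracket (schX 2) (schY 0) p = 0
      rw [vbracket_eq hX3 hY1]; funext i; fin_cases i <;>
        (simp [schX, schY]; try field_simp) <;> try ring
    · show vbracket (schX 2) (schY 1) p = 0
      rw [vbracket_eq hX3 hY2]; funext i; fin_cases i <;>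
        (simp [schX, schY]; try field_simp) <;> try ring
    · show vbracket (schX 2) (schY 2) p = 0
      rw [vbracket_eq hX3 hY3]; funext i; fin_cases i <;>
        (simp [schX, schY]; try field_simp) <;> try ring
  · rw [vbracket_eq hY1 hY2]
    funext i; fin_cases i <;> simp [schY]
  · rw [vbracket_eq hY1 hY3]
    funext i; fin_cases i <;> (simp [schY]; try ring)
  · rw [vbracket_eq hY2 hY3]
    funext i; fin_cases i <;> (simp [schY]; try ring)
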